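/- Let s ≥ 1 and p ≥ 3 be integers, and let (A_n)_{n≥1} be a sequence of finite sets with #A_1 = s·p and #A_n = p for all n ≥ 2. Let X = Π_{n≥1} A_n. Fix t ∈ [0,1] and a set N ⊆ ℕ with lim_{n→∞} #{1 ≤ k ≤ n : k ∈ N}/n = t. For n ≥ 1 set ε(t,n) = p^{−#{1 ≤ k ≤ n : k ∉ N}} · (p/(p−2))^{−#{1 ≤ k ≤ n : k ∈ N}}, and define the ultrametric d_t on X by d_t(ξ,ξ) = 0 and d_t(ξ,η) = ε(t,n) where n = min{k : ξ_k ≠ η_k} for ξ ≠ η. Then the box dimension of (X, d_t) exists and equals (1 − t·log(p−2)/log p)^{−1}; that is, lim_{ε→0⁺} log Sep(X, d_t, ε)/(−log ε) = (1 − t·log(p−2)/log p)^{−1}. -/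

import Mathlib

open MeasureTheory Filter Set Topology
open scoped symmDiff ENNReal

/-- Extended logarithm of an `ℝ≥0∞` value, with `eLog 0 = ⊥` and `eLog ⊤ = ⊤`. -/
noncomputable def eLog (x : ℝ≥0∞) : EReal :=
  if x = 0 then ⊥ else if x = ⊤ then ⊤ else ((Real.log x.toReal : ℝ) : EReal)

/-- Maximal cardinality (in `ℝ≥0∞`) of an `ε`-separated subset of `S` w.r.t. `d`. -/
noncomputable def sepCount {Z : Type*} (S : Set Z) (d : Z → Z → ℝ) (ε : ℝ) : ℝ≥0∞ :=
  ⨆ (A : Finset Z) (_ : ↑A ⊆ S ∧ (A : Set Z).Pairwise fun z z' => ε ≤ d z z'), (A.card : ℝ≥0∞)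

/-- The quantity `log Sep(S, d, ε) / (- log ε)`, as an extended real. -/
noncomputable def acRatio {Z : Type*} (S : Set Z) (d : Z → Z → ℝ) (ε : ℝ) : EReal :=
  eLog (sepCount S d ε) * (((-Real.log ε)⁻¹ : ℝ) : EReal)

open Classical in
/-- `F` is a left Følner sequence in the group `G`. -/
def IsFolner {G : Type*} [Group G] (F : ℕ → Finset G) : Prop :=
  (∀ n, (F n).Nonempty) ∧ ∀ g : G,
    Filter.Tendsto
      (fun n => ((((F n).image fun h => g * h) ∆ F n).card : ℝ) / ((F n).card : ℝ))
      Filter.atTop (nhds 0)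

/-- The Besicovitch pseudometric w.r.t. the sequence `F`. -/
noncomputable def besicovitchDist {G : Type*} (F : ℕ → Finset G) (x y : G → Bool) : ℝ :=
  Filter.limsup (fun n => (((F n).filter fun g => x g ≠ y g).card : ℝ) / ((F n).card : ℝ))
    Filter.atTop

open Classical in
/-- The symbolic model set (as a 0-1 array) associated to a window `W ⊆ H`. -/
noncomputable def modelSet {G H : Type*} (τ : G → H) (W : Set H) : G → Bool :=
  fun g => decide (τ g ∈ W)

/-- Orbit closure of `x` under the left shift `(g·x)(h) = x(hg)`, in the product topology. -/
def shiftOrbitClosure {G : Type*} [Group G] (x : G → Bool) : Set (G → Bool) :=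
  closure { y : G → Bool | ∃ g : G, y = fun h => x (h * g) }

/-- `Per(x, Γ, α)`, the set of `Γ`-periodic positions of `x` with value `α`. -/
def perA {G : Type*} [Group G] (x : G → Bool) (Γ : Subgroup G) (α : Bool) : Set G :=
  { g : G | ∀ γ ∈ Γ, x (g * γ) = α }

/-- `Per(x, Γ) = Per(x,Γ,0) ∪ Per(x,Γ,1)`. -/
def perSet {G : Type*} [Group G] (x : G → Bool) (Γ : Subgroup G) : Set G :=
  perA x Γ false ∪ perA x Γ true

/-- `E` is a fundamental domain of `G/Γ`: `g ↦ gΓ` is a bijection from `E` onto `G/Γ`. -/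
def IsFundDom {G : Type*} [Group G] (Γ : Subgroup G) (E : Finset G) : Prop :=
  ∀ g : G, ∃! d, d ∈ E ∧ g⁻¹ * d ∈ Γ

/-- The density `D(x,Γ)` of `Per(x,Γ)` computed in a fundamental domain `E`. -/
noncomputable def perDensity {G : Type*} [Group G] (x : G → Bool) (Γ : Subgroup G)
    (E : Finset G) : ℝ :=
  (((E : Set G) ∩ perSet x Γ).ncard : ℝ) / (E.card : ℝ)

/-- The regularity constant `𝒟(x)`. -/
noncomputable def regConst {G : Type*} [Group G] (x : G → Bool) : ℝ :=
  sSup { r : ℝ | ∃ (Γ : Subgroup G) (E : Finset G),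
    Γ.FiniteIndex ∧ IsFundDom Γ E ∧ r = perDensity x Γ E }

open Classical in
/-- `#{1 ≤ k ≤ n : k ∈ N}`, with indices shifted to start at `0`. -/
noncomputable def densCount (N : Set ℕ) (n : ℕ) : ℕ :=
  ((Finset.range n).filter fun k => k ∈ N).card

open Classical in
/-- The scale `ε(t,n)` (here `m` is the `0`-based index, corresponding to `n = m + 1`). -/
noncomputable def epsWeight (p : ℕ) (N : Set ℕ) (m : ℕ) : ℝ :=
  ((p : ℝ) ^ ((Finset.range (m + 1)).filter (fun k => k ∉ N)).card)⁻¹ *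
    (((p : ℝ) / ((p : ℝ) - 2)) ^ ((Finset.range (m + 1)).filter (fun k => k ∈ N)).card)⁻¹

open Classical in
/-- The ultrametric `d_t` on the product space. -/
noncomputable def ultraDist {A : ℕ → Type*} (p : ℕ) (N : Set ℕ) (ξ η : (n : ℕ) → A n) : ℝ :=
  if h : ξ = η then 0 else epsWeight p N (Nat.find (Function.ne_iff.mp h))


section Stmt12Aux

open Classical in
noncomputable def aCnt (N : Set ℕ) (m : ℕ) : ℕ :=
  ((Finset.range (m+1)).filter (fun k => k ∉ N)).card
open Classical in
noncomputable def bCnt (N : Set ℕ) (m : ℕ) : ℕ :=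
  ((Finset.range (m+1)).filter (fun k => k ∈ N)).card

lemma epsWeight_eq (p : ℕ) (N : Set ℕ) (m : ℕ) :
    epsWeight p N m = ((p:ℝ) ^ aCnt N m)⁻¹ * (((p:ℝ)/((p:ℝ)-2)) ^ bCnt N m)⁻¹ := rfl

open Classical in
lemma aCnt_succ (N : Set ℕ) (m : ℕ) :
    aCnt N (m+1) = aCnt N m + if (m+1) ∈ N then 0 else 1 := by
  rw [aCnt, aCnt, Finset.range_add_one, Finset.filter_insert]
  split <;> simp [Finset.card_insert_of_notMem, *]

open Classical in
lemma bCnt_succ (N : Set ℕ) (m : ℕ) :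
    bCnt N (m+1) = bCnt N m + if (m+1) ∈ N then 1 else 0 := by
  rw [bCnt, bCnt, Finset.range_add_one, Finset.filter_insert]
  split <;> simp [Finset.card_insert_of_notMem, *]

open Classical in
lemma aCnt_add_bCnt (N : Set ℕ) (m : ℕ) : aCnt N m + bCnt N m = m + 1 := by
  rw [aCnt, bCnt, add_comm]
  simpa using Finset.card_filter_add_card_filter_not (s := Finset.range (m+1))
    (p := fun k => k ∈ N)

section
variable (p : ℕ) (N : Set ℕ) (hp : 3 ≤ p)
include hp

lemma stmt12_Psub_pos : (0:ℝ) < (p:ℝ) - 2 := by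
  have : (3:ℝ) ≤ (p:ℝ) := by exact_mod_cast hp
  linarith
lemma stmt12_P_one_lt : (1:ℝ) < (p:ℝ) := by
  have : (3:ℝ) ≤ (p:ℝ) := by exact_mod_cast hp
  linarith
lemma stmt12_Q_one_lt : (1:ℝ) < (p:ℝ)/((p:ℝ)-2) := by
  rw [lt_div_iff₀ (stmt12_Psub_pos p hp)]; linarith
lemma stmt12_Q_pos : (0:ℝ) < (p:ℝ)/((p:ℝ)-2) := lt_trans one_pos (stmt12_Q_one_lt p hp)

lemma epsWeight_pos (m : ℕ) : 0 < epsWeight p N m := by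
  rw [epsWeight_eq]
  have h1 : (0:ℝ) < (p:ℝ) := lt_trans one_pos (stmt12_P_one_lt p hp)
  have h2 := stmt12_Q_pos p hp
  positivity

open Classical in
lemma epsWeight_succ (m : ℕ) :
    epsWeight p N (m+1) = epsWeight p N m *
      (if (m+1) ∈ N then ((p:ℝ)/((p:ℝ)-2))⁻¹ else ((p:ℝ))⁻¹) := by
  rw [epsWeight_eq, epsWeight_eq, aCnt_succ, bCnt_succ]
  by_cases h : (m+1) ∈ N <;> simp only [h, if_true, if_false, add_zero] <;>
    rw [pow_succ] <;> ring

lemma epsWeight_succ_lt (m : ℕ) : epsWeight p N (m+1) < epsWeight p N m := by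
  rw [epsWeight_succ p N hp]
  have hw := epsWeight_pos p N hp m
  split
  · exact mul_lt_of_lt_one_right hw (inv_lt_one_of_one_lt₀ (stmt12_Q_one_lt p hp))
  · exact mul_lt_of_lt_one_right hw (inv_lt_one_of_one_lt₀ (stmt12_P_one_lt p hp))

lemma epsWeight_anti : StrictAnti (epsWeight p N) :=
  strictAnti_nat_of_succ_lt (epsWeight_succ_lt p N hp)

lemma stmt12_Pinv_le_Qinv : ((p:ℝ))⁻¹ ≤ ((p:ℝ)/((p:ℝ)-2))⁻¹ := by
  apply inv_anti₀ (stmt12_Q_pos p hp)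
  rw [div_le_iff₀ (stmt12_Psub_pos p hp)]
  have h3 : (3:ℝ) ≤ (p:ℝ) := by exact_mod_cast hp
  nlinarith

open Classical in
lemma stmt12_factor_le (m : ℕ) :
    (if (m+1) ∈ N then ((p:ℝ)/((p:ℝ)-2))⁻¹ else ((p:ℝ))⁻¹) ≤ ((p:ℝ)/((p:ℝ)-2))⁻¹ := by
  split
  · exact le_refl _
  · exact stmt12_Pinv_le_Qinv p hp

open Classical in
lemma stmt12_factor_pos (m : ℕ) :
    (0:ℝ) < (if (m+1) ∈ N then ((p:ℝ)/((p:ℝ)-2))⁻¹ else ((p:ℝ))⁻¹) := by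
  have h1 : (0:ℝ) < (p:ℝ) := lt_trans one_pos (stmt12_P_one_lt p hp)
  have h2 := stmt12_Q_pos p hp
  split <;> positivity

lemma epsWeight_le_pow (m : ℕ) :
    epsWeight p N m ≤ (((p:ℝ)/((p:ℝ)-2))⁻¹) ^ (m+1) := by
  induction m with
  | zero =>
    rw [epsWeight_eq, pow_one]
    have h0 : aCnt N 0 + bCnt N 0 = 1 := aCnt_add_bCnt N 0
    have hQP := stmt12_Pinv_le_Qinv p hp
    rcases Nat.add_eq_one_iff.mp h0 with ⟨ha, hb⟩ | ⟨ha, hb⟩ <;>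
      simp only [ha, hb, pow_zero, pow_one, inv_one, one_mul, mul_one] <;>
      simpa using hQP
  | succ m ih =>
    rw [epsWeight_succ p N hp, pow_succ]
    exact mul_le_mul ih (stmt12_factor_le p N hp m) (stmt12_factor_pos p N hp m).le
      (pow_nonneg (inv_pos.mpr (stmt12_Q_pos p hp)).le _)

lemma epsWeight_lt_one (m : ℕ) : epsWeight p N m < 1 :=
  lt_of_le_of_lt (epsWeight_le_pow p N hp m)
    (pow_lt_one₀ (inv_pos.mpr (stmt12_Q_pos p hp)).le
      (inv_lt_one_of_one_lt₀ (stmt12_Q_one_lt p hp)) (by omega))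

lemma epsWeight_tendsto_zero :
    Filter.Tendsto (epsWeight p N) Filter.atTop (nhds 0) := by
  have hq : (((p:ℝ)/((p:ℝ)-2))⁻¹) < 1 := inv_lt_one_of_one_lt₀ (stmt12_Q_one_lt p hp)
  have hq0 : (0:ℝ) ≤ ((p:ℝ)/((p:ℝ)-2))⁻¹ := (inv_pos.mpr (stmt12_Q_pos p hp)).le
  have h1 : Filter.Tendsto (fun m : ℕ => (((p:ℝ)/((p:ℝ)-2))⁻¹) ^ (m+1))
      Filter.atTop (nhds 0) :=
    (tendsto_pow_atTop_nhds_zero_of_lt_one hq0 hq).comp (Filter.tendsto_add_atTop_nat 1)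
  exact squeeze_zero (fun m => (epsWeight_pos p N hp m).le)
    (fun m => epsWeight_le_pow p N hp m) h1

end

lemma sepCount_eq_prod (p : ℕ) (N : Set ℕ) (A : ℕ → Type) [∀ n, Fintype (A n)]
    [∀ n, Nonempty (A n)]
    (hanti : ∀ m m' : ℕ, m ≤ m' → epsWeight p N m' ≤ epsWeight p N m)
    (M : ℕ) (ε : ℝ)
    (hε1 : ε ≤ epsWeight p N M) (hε2 : epsWeight p N (M+1) < ε) :
    sepCount (Set.univ : Set ((n:ℕ) → A n)) (ultraDist p N) ε
      = ((∏ n ∈ Finset.range (M+1), Fintype.card (A n) : ℕ) : ℝ≥0∞) := by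
  classical
  haveI : ∀ n, Inhabited (A n) := fun n => Classical.inhabited_of_nonempty (by infer_instance)
  have cardY : Fintype.card (∀ i : Fin (M+1), A i)
      = ∏ n ∈ Finset.range (M+1), Fintype.card (A n) := by
    rw [Fintype.card_pi]
    exact Fin.prod_univ_eq_prod_range (fun n => Fintype.card (A n)) (M+1)
  set e : (∀ i : Fin (M+1), A i) → ((n:ℕ) → A n) :=
    fun y n => if h : n < M+1 then y ⟨n, h⟩ else default with he
  have einj : Function.Injective e := by
    intro y y' hyy
    funext i
    have h2 := congrFun hyy i.val
    simpa [he, i.isLt, Nat.lt_succ_iff.mp i.isLt] using h2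
  rw [sepCount]
  apply le_antisymm
  · refine iSup_le fun B => iSup_le fun hB => ?_
    have hinj : Set.InjOn (fun ξ : (n:ℕ) → A n => fun i : Fin (M+1) => ξ i.val) ↑B := by
      intro ξ hξ η hη hr
      by_contra hne
      have hd := hB.2 hξ hη hne
      simp only [ultraDist] at hd; rw [dif_neg hne] at hd
      have h1 : M + 1 ≤ Nat.find (Function.ne_iff.mp hne) := by
        by_contra hlt
        push_neg at hlt
        exact (Nat.find_spec (Function.ne_iff.mp hne))
          (congrFun hr ⟨Nat.find (Function.ne_iff.mp hne), hlt⟩)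
      have := le_trans hd (hanti _ _ h1)
      linarith
    have hcard : B.card ≤ Fintype.card (∀ i : Fin (M+1), A i) := by
      rw [← Finset.card_univ]
      exact Finset.card_le_card_of_injOn _ (fun a _ => Finset.mem_univ _) hinj
    rw [← cardY]
    exact_mod_cast Nat.cast_le.mpr hcard
  · have hpair : (↑(Finset.image e Finset.univ) : Set ((n:ℕ) → A n)).Pairwise
        fun z z' => ε ≤ ultraDist p N z z' := by
      intro ξ hξ η hη hne
      simp only [ultraDist]; rw [dif_neg hne]
      obtain ⟨y, -, rfl⟩ := Finset.mem_image.mp (Finset.mem_coe.mp hξ)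
      obtain ⟨y', -, rfl⟩ := Finset.mem_image.mp (Finset.mem_coe.mp hη)
      obtain ⟨n, hn⟩ := Function.ne_iff.mp hne
      have hnM : n < M + 1 := by
        by_contra h
        push_neg at h
        exact hn (by simp only [he, dif_neg (not_lt.mpr h)])
      have hfind : Nat.find (Function.ne_iff.mp hne) ≤ M :=
        Nat.lt_succ_iff.mp (lt_of_le_of_lt (Nat.find_min' _ hn) hnM)
      exact le_trans hε1 (hanti _ _ hfind)
    refine le_trans ?_ (le_iSup₂ (f := fun (B : Finset ((n:ℕ) → A n)) _ => (B.card : ℝ≥0∞))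
      (Finset.image e Finset.univ) ⟨by simp, hpair⟩)
    rw [Finset.card_image_of_injective _ einj, Finset.card_univ, cardY]

open Classical in
noncomputable def scaleIdx (p : ℕ) (N : Set ℕ) (ε : ℝ) : ℕ :=
  if h : ∃ m, epsWeight p N m < ε then Nat.find h - 1 else 0

lemma scaleIdx_spec (p : ℕ) (N : Set ℕ) (hp : 3 ≤ p) {ε : ℝ}
    (hε : 0 < ε) (hε0 : ε ≤ epsWeight p N 0) :
    ε ≤ epsWeight p N (scaleIdx p N ε) ∧ epsWeight p N (scaleIdx p N ε + 1) < ε := by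
  have hex : ∃ m, epsWeight p N m < ε :=
    ((epsWeight_tendsto_zero p N hp).eventually (gt_mem_nhds hε)).exists
  rw [scaleIdx, dif_pos hex]
  have hfind1 : 1 ≤ Nat.find hex := by
    by_contra h
    push_neg at h
    interval_cases h' : Nat.find hex
    · have := Nat.find_spec hex
      rw [h'] at this
      linarith
  constructor
  · have h2 := Nat.find_min hex (m := Nat.find hex - 1) (by omega)
    push_neg at h2
    exact h2
  · have h3 : Nat.find hex - 1 + 1 = Nat.find hex := by omega
    rw [h3]
    exact Nat.find_spec hex

lemma scaleIdx_tendsto (p : ℕ) (N : Set ℕ) (hp : 3 ≤ p) :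
    Filter.Tendsto (scaleIdx p N) (𝓝[>] (0:ℝ)) Filter.atTop := by
  rw [Filter.tendsto_atTop]
  intro K
  have hwK : 0 < epsWeight p N K := epsWeight_pos p N hp K
  filter_upwards [Ioc_mem_nhdsGT_of_mem ⟨le_refl (0:ℝ), hwK⟩] with ε hε
  have hex : ∃ m, epsWeight p N m < ε :=
    ((epsWeight_tendsto_zero p N hp).eventually (gt_mem_nhds hε.1)).exists
  rw [scaleIdx, dif_pos hex]
  have hK : K < Nat.find hex := by
    rw [Nat.lt_find_iff]
    intro m hm
    push_neg
    exact le_trans hε.2 ((epsWeight_anti p N hp).antitone hm)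
  omega

lemma aux_analysis_main (p : ℕ) (t : ℝ) (hp : 3 ≤ p)
    (a b : ℕ → ℕ) (hab : ∀ m, a m + b m = m + 1)
    (hb : Filter.Tendsto (fun m => (b m : ℝ) / ((m:ℝ)+1)) Filter.atTop (nhds t)) :
    Filter.Tendsto
      (fun m => ((a m : ℝ) * Real.log p + (b m : ℝ) * Real.log ((p:ℝ)/((p:ℝ)-2))) / ((m:ℝ)+1))
      Filter.atTop (nhds (Real.log p - t * Real.log ((p:ℝ)-2))) := by
  have hP : (0:ℝ) < (p:ℝ) := by positivity
  have h3 : (3:ℝ) ≤ (p:ℝ) := by exact_mod_cast hp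
  have hPs : (0:ℝ) < (p:ℝ) - 2 := by linarith
  have hlogQ : Real.log ((p:ℝ)/((p:ℝ)-2)) = Real.log p - Real.log ((p:ℝ)-2) :=
    Real.log_div (by positivity) (by positivity)
  have ha : Filter.Tendsto (fun m => (a m : ℝ) / ((m:ℝ)+1)) Filter.atTop (nhds (1 - t)) := by
    have heq : ∀ m : ℕ, (a m : ℝ) / ((m:ℝ)+1) = 1 - (b m : ℝ)/((m:ℝ)+1) := by
      intro m
      have h := hab m
      have h2 : (a m : ℝ) = ((m:ℝ)+1) - (b m : ℝ) := by
        have := congrArg (fun k : ℕ => (k:ℝ)) h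
        push_cast at this ⊢
        linarith
      rw [h2]
      field_simp
    simp_rw [heq]
    simpa using (tendsto_const_nhds (x := (1:ℝ))).sub hb
  have key : Filter.Tendsto
      (fun m => (a m : ℝ)/((m:ℝ)+1) * Real.log p
        + (b m : ℝ)/((m:ℝ)+1) * Real.log ((p:ℝ)/((p:ℝ)-2)))
      Filter.atTop (nhds ((1-t) * Real.log p + t * Real.log ((p:ℝ)/((p:ℝ)-2)))) :=
    (ha.mul tendsto_const_nhds).add (hb.mul tendsto_const_nhds)
  have heq2 : ((1:ℝ)-t) * Real.log p + t * Real.log ((p:ℝ)/((p:ℝ)-2))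
      = Real.log p - t * Real.log ((p:ℝ)-2) := by
    rw [hlogQ]; ring
  rw [← heq2]
  refine key.congr fun m => ?_
  field_simp

lemma aux_tendsto_nu_div (c0 l D : ℝ) (hD : D ≠ 0) (L : ℕ → ℝ)
    (hL : Filter.Tendsto (fun m => L m / ((m:ℝ)+1)) Filter.atTop (nhds D)) :
    Filter.Tendsto (fun m : ℕ => (c0 + ((m:ℝ)+1) * l) / L m) Filter.atTop (nhds (l / D)) := by
  have hm1 : Filter.Tendsto (fun m : ℕ => ((m:ℝ)+1)) Filter.atTop Filter.atTop :=
    tendsto_atTop_add_const_right _ 1 tendsto_natCast_atTop_atTop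
  have hnum : Filter.Tendsto (fun m : ℕ => c0/((m:ℝ)+1) + l) Filter.atTop (nhds (0 + l)) :=
    (tendsto_const_nhds.div_atTop hm1).add tendsto_const_nhds
  have key := hnum.div hL hD
  rw [zero_add] at key
  refine key.congr fun m => ?_
  rcases eq_or_ne (L m) 0 with h | h
  · simp [h]
  · have hm : ((m:ℝ)+1) ≠ 0 := by positivity
    simp only [Pi.div_apply]
    field_simp

lemma aux_shift (D : ℝ) (L : ℕ → ℝ)
    (hL : Filter.Tendsto (fun m => L m/((m:ℝ)+1)) Filter.atTop (nhds D)) :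
    Filter.Tendsto (fun m => L (m+1) / ((m:ℝ)+1)) Filter.atTop (nhds D) := by
  have h1 : Filter.Tendsto (fun m : ℕ => L (m+1) / ((m:ℝ)+2)) Filter.atTop (nhds D) := by
    have h0 := hL.comp (Filter.tendsto_add_atTop_nat 1)
    refine h0.congr fun m => ?_
    simp only [Function.comp]
    push_cast
    ring_nf
  have h2 : Filter.Tendsto (fun m : ℕ => ((m:ℝ)+2)/((m:ℝ)+1)) Filter.atTop (nhds 1) := by
    have h3 : Filter.Tendsto (fun m : ℕ => 1 + 1/((m:ℝ)+1)) Filter.atTop (nhds (1+0)) :=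
      tendsto_const_nhds.add (tendsto_const_nhds.div_atTop
        (tendsto_atTop_add_const_right _ 1 tendsto_natCast_atTop_atTop))
    rw [add_zero] at h3
    refine h3.congr fun m => ?_
    have hm : ((m:ℝ)+1) ≠ 0 := by positivity
    field_simp
    ring
  have key := h1.mul h2
  rw [mul_one] at key
  refine key.congr fun m => ?_
  have hm1 : ((m:ℝ)+1) ≠ 0 := by positivity
  have hm2 : ((m:ℝ)+2) ≠ 0 := by positivity
  field_simp

lemma aux_prod_card (s p : ℕ) (A : ℕ → Type) [∀ n, Fintype (A n)]
    (hA0 : Fintype.card (A 0) = s * p) (hA : ∀ n, 1 ≤ n → Fintype.card (A n) = p) (M : ℕ) :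
    ∏ n ∈ Finset.range (M+1), Fintype.card (A n) = s * p^(M+1) := by
  induction M with
  | zero => simpa using hA0
  | succ M ih =>
    rw [Finset.prod_range_succ, ih, hA (M+1) (by omega), pow_succ]
    ring

lemma neg_log_epsWeight (p : ℕ) (N : Set ℕ) (hp : 3 ≤ p) (m : ℕ) :
    -Real.log (epsWeight p N m)
      = (aCnt N m : ℝ) * Real.log p + (bCnt N m : ℝ) * Real.log ((p:ℝ)/((p:ℝ)-2)) := by
  have hP : (0:ℝ) < (p:ℝ) := lt_trans one_pos (stmt12_P_one_lt p hp)
  have hQ := stmt12_Q_pos p hp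
  rw [epsWeight_eq, Real.log_mul (by positivity) (by positivity),
    Real.log_inv, Real.log_inv, Real.log_pow, Real.log_pow]
  push_cast
  ring

end Stmt12Aux

/-- the box dimension of the product space `X = Π A_n` with respect to the
ultrametric `d_t` exists and equals `(1 - t·log(p-2)/log p)⁻¹`. -/
theorem stmt_12 (s p : ℕ) (hs : 1 ≤ s) (hp : 3 ≤ p)
    (A : ℕ → Type) [∀ n, Fintype (A n)]
    (hA0 : Fintype.card (A 0) = s * p) (hA : ∀ n, 1 ≤ n → Fintype.card (A n) = p)
    (t : ℝ) (ht : t ∈ Set.Icc (0 : ℝ) 1) (N : Set ℕ)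
    (hN : Filter.Tendsto (fun n => (densCount N n : ℝ) / (n : ℝ)) Filter.atTop (nhds t)) :
    Filter.Tendsto
      (fun ε => acRatio (Set.univ : Set ((n : ℕ) → A n)) (ultraDist p N) ε)
      (𝓝[>] (0 : ℝ))
      (nhds (((1 - t * Real.log ((p : ℝ) - 2) / Real.log (p : ℝ))⁻¹ : ℝ) : EReal)) := by
  classical
  obtain ⟨ht0, ht1⟩ := ht
  have hp3 : (3:ℝ) ≤ (p:ℝ) := by exact_mod_cast hp
  haveI hNE : ∀ n, Nonempty (A n) := by
    intro n
    rcases Nat.eq_zero_or_pos n with h | h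
    · subst h
      exact Fintype.card_pos_iff.mp (by rw [hA0]; exact Nat.mul_pos hs (by omega))
    · exact Fintype.card_pos_iff.mp (by rw [hA n h]; omega)
  have hanti : ∀ m m' : ℕ, m ≤ m' → epsWeight p N m' ≤ epsWeight p N m :=
    fun m m' h => (epsWeight_anti p N hp).antitone h
  have hw0pos : 0 < epsWeight p N 0 := epsWeight_pos p N hp 0
  have hlogp : 0 < Real.log p := Real.log_pos (stmt12_P_one_lt p hp)
  have hlogp2 : 0 ≤ Real.log ((p:ℝ)-2) := Real.log_nonneg (by linarith)
  have hlogQpos : 0 < Real.log ((p:ℝ)/((p:ℝ)-2)) := Real.log_pos (stmt12_Q_one_lt p hp)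
  have hPsub := stmt12_Psub_pos p hp
  set D := Real.log p - t * Real.log ((p:ℝ)-2) with hD
  have hlogQ : Real.log ((p:ℝ)/((p:ℝ)-2)) = Real.log p - Real.log ((p:ℝ)-2) :=
    Real.log_div (by positivity) (by positivity)
  have hDpos : 0 < D := by
    have h1 : t * Real.log ((p:ℝ)-2) ≤ Real.log ((p:ℝ)-2) := mul_le_of_le_one_left hlogp2 ht1
    rw [hlogQ] at hlogQpos
    rw [hD]
    linarith
  have hc : (1 - t * Real.log ((p:ℝ) - 2) / Real.log (p:ℝ))⁻¹ = Real.log p / D := by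
    have h1 : 1 - t * Real.log ((p:ℝ)-2) / Real.log p = D / Real.log p := by
      rw [hD]
      field_simp
    rw [h1, inv_div]
  set L : ℕ → ℝ := fun m =>
    (aCnt N m : ℝ) * Real.log p + (bCnt N m : ℝ) * Real.log ((p:ℝ)/((p:ℝ)-2)) with hLdef
  have hLw : ∀ m, L m = -Real.log (epsWeight p N m) :=
    fun m => (neg_log_epsWeight p N hp m).symm
  have hLpos : ∀ m, 0 < L m := by
    intro m
    rw [hLw m]
    have := Real.log_neg (epsWeight_pos p N hp m) (epsWeight_lt_one p N hp m)
    linarith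
  have hb : Filter.Tendsto (fun m => (bCnt N m : ℝ)/((m:ℝ)+1)) Filter.atTop (nhds t) := by
    have h1 := hN.comp (Filter.tendsto_add_atTop_nat 1)
    refine h1.congr fun m => ?_
    have h2 : densCount N (m+1) = bCnt N m := rfl
    simp only [Function.comp, h2]
    push_cast
    ring
  have hLD : Filter.Tendsto (fun m => L m / ((m:ℝ)+1)) Filter.atTop (nhds D) :=
    aux_analysis_main p t hp (aCnt N) (bCnt N) (aCnt_add_bCnt N) hb
  set ν : ℕ → ℝ := fun m => Real.log s + ((m:ℝ)+1) * Real.log p with hνdef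
  have hg : Filter.Tendsto (fun m => ν m / L m) Filter.atTop (nhds (Real.log p / D)) :=
    aux_tendsto_nu_div (Real.log s) (Real.log p) D hDpos.ne' L hLD
  have hh : Filter.Tendsto (fun m => ν m / L (m+1)) Filter.atTop (nhds (Real.log p / D)) :=
    aux_tendsto_nu_div (Real.log s) (Real.log p) D hDpos.ne' (fun m => L (m+1))
      (aux_shift D L hLD)
  have hMtend := scaleIdx_tendsto p N hp
  have hgM : Filter.Tendsto (fun ε => ν (scaleIdx p N ε) / L (scaleIdx p N ε))
      (𝓝[>] (0:ℝ)) (nhds (Real.log p / D)) := hg.comp hMtend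
  have hhM : Filter.Tendsto (fun ε => ν (scaleIdx p N ε) / L (scaleIdx p N ε + 1))
      (𝓝[>] (0:ℝ)) (nhds (Real.log p / D)) := hh.comp hMtend
  have hev : ∀ᶠ ε in 𝓝[>] (0:ℝ), ε ∈ Set.Ioc (0:ℝ) (epsWeight p N 0) :=
    Ioc_mem_nhdsGT_of_mem ⟨le_refl 0, hw0pos⟩
  set f : ℝ → ℝ := fun ε => ν (scaleIdx p N ε) / (-Real.log ε) with hfdef
  have hbounds : ∀ᶠ ε in 𝓝[>] (0:ℝ),
      ν (scaleIdx p N ε) / L (scaleIdx p N ε + 1) ≤ f ε ∧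
      f ε ≤ ν (scaleIdx p N ε) / L (scaleIdx p N ε) := by
    filter_upwards [hev] with ε hε
    obtain ⟨h1, h2⟩ := scaleIdx_spec p N hp hε.1 hε.2
    set M := scaleIdx p N ε
    have hL1 : L M ≤ -Real.log ε := by
      have h3 : Real.log ε ≤ Real.log (epsWeight p N M) := Real.log_le_log hε.1 h1
      rw [hLw M]
      linarith
    have hL2 : -Real.log ε ≤ L (M+1) := by
      have h3 : Real.log (epsWeight p N (M+1)) ≤ Real.log ε :=
        Real.log_le_log (epsWeight_pos p N hp (M+1)) h2.le
      rw [hLw (M+1)]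
      linarith
    have hLMpos : 0 < L M := hLpos M
    have hlogε : 0 < -Real.log ε := lt_of_lt_of_le hLMpos hL1
    have hνnn : 0 ≤ ν M := by
      have hls : (0:ℝ) ≤ Real.log s := Real.log_nonneg (by exact_mod_cast hs)
      have h4 : (0:ℝ) ≤ ((M:ℝ)+1) * Real.log p := by positivity
      simp only [hνdef]
      linarith
    constructor
    · exact div_le_div_of_nonneg_left hνnn hlogε hL2
    · exact div_le_div_of_nonneg_left hνnn hLMpos hL1
  have hftend : Filter.Tendsto f (𝓝[>] (0:ℝ)) (nhds (Real.log p / D)) :=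
    tendsto_of_tendsto_of_tendsto_of_le_of_le' hhM hgM
      (hbounds.mono fun ε h => h.1) (hbounds.mono fun ε h => h.2)
  have heq : ∀ᶠ ε in 𝓝[>] (0:ℝ),
      (fun ε => ((f ε : ℝ) : EReal)) ε
        = acRatio (Set.univ : Set ((n : ℕ) → A n)) (ultraDist p N) ε := by
    filter_upwards [hev] with ε hε
    obtain ⟨h1, h2⟩ := scaleIdx_spec p N hp hε.1 hε.2
    set M := scaleIdx p N ε
    have hsep := sepCount_eq_prod p N A hanti M ε h1 h2
    rw [aux_prod_card s p A hA0 hA M] at hsep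
    have hkpos : 0 < s * p^(M+1) := Nat.mul_pos hs (pow_pos (by omega) _)
    rw [acRatio, hsep]
    have h0 : ((s*p^(M+1) : ℕ) : ℝ≥0∞) ≠ 0 := by exact_mod_cast hkpos.ne'
    have htop : ((s*p^(M+1) : ℕ) : ℝ≥0∞) ≠ ⊤ := ENNReal.natCast_ne_top _
    rw [eLog, if_neg h0, if_neg htop, ENNReal.toReal_natCast, ← EReal.coe_mul]
    have hlogk : Real.log ((s*p^(M+1) : ℕ) : ℝ) = ν M := by
      have hs0 : ((s:ℝ)) ≠ 0 := by
        have : (1:ℝ) ≤ (s:ℝ) := by exact_mod_cast hs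
        linarith
      have hppos : (0:ℝ) < (p:ℝ) := by linarith
      push_cast
      rw [Real.log_mul hs0 (by positivity), Real.log_pow]
      simp only [hνdef]
      push_cast
      ring
    rw [hlogk]
    congr 1
  rw [hc]
  have hcoe : Filter.Tendsto (fun ε => ((f ε : ℝ) : EReal)) (𝓝[>] (0:ℝ))
      (nhds ((Real.log p / D : ℝ) : EReal)) :=
    (continuous_coe_real_ereal.tendsto _).comp hftend
  exact hcoe.congr' heq
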